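/- Let (x*, y*) be a partial minimizer of the equality-constrained problem min f(x,y) s.t. g(x,y) = 0, x ∈ X, y ∈ Y. Suppose f is locally Lipschitz in each block direction with constant L around (x*,y*), and each constraint gᵢ satisfies the lower bound lᵢ ‖x - x*‖ ≤ |gᵢ(x,y*) - gᵢ(x*,y*)| and lᵢ ‖y - y*‖ ≤ |gᵢ(x*,y) - gᵢ(x*,y*)| for points in a neighborhood N(x*,y*) (and globally on the compact sets X × {y*} and {x*} × Y via the induced global Lipschitz bound). Set ρ̄ = (L / (m·l̄)) e with l̄ = minᵢ lᵢ and e the all-ones vector. Then for every ρ ≥ ρ̄ (componentwise), (x*, y*) is a partial minimizer over X × Y of the penalty function P(x,y;ρ) = f(x,y) + Σᵢ ρᵢ |gᵢ(x,y)|. -/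

import Mathlib

/-- Exactness of the ℓ₁ penalty function with respect to partial minima:
a partial minimizer of the equality-constrained problem is a partial minimizer
of the penalty function for all penalty weights ρ ≥ ρ̄ = (L/(m·l̄))e. -/
theorem stmt5 {E F : Type*} [NormedAddCommGroup E] [NormedAddCommGroup F] {m : ℕ}
    (hm : (Finset.univ : Finset (Fin m)).Nonempty)
    (X : Set E) (Y : Set F) (hXne : X.Nonempty) (hYne : Y.Nonempty)
    (hXc : IsCompact X) (hYc : IsCompact Y)
    (f : E → F → ℝ) (g : E → F → Fin m → ℝ)
    (xs : E) (ys : F) (hx : xs ∈ X) (hy : ys ∈ Y)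
    (hfeas : ∀ i, g xs ys i = 0)
    (hpm1 : ∀ x ∈ X, (∀ i, g x ys i = 0) → f xs ys ≤ f x ys)
    (hpm2 : ∀ y ∈ Y, (∀ i, g xs y i = 0) → f xs ys ≤ f xs y)
    (L : ℝ) (hL : 0 ≤ L)
    (hfx : ∀ x ∈ X, |f x ys - f xs ys| ≤ L * ‖x - xs‖)
    (hfy : ∀ y ∈ Y, |f xs y - f xs ys| ≤ L * ‖y - ys‖)
    (l : Fin m → ℝ) (hl : ∀ i, 0 < l i)
    (hgx : ∀ i, ∀ x ∈ X, l i * ‖x - xs‖ ≤ |g x ys i - g xs ys i|)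
    (hgy : ∀ i, ∀ y ∈ Y, l i * ‖y - ys‖ ≤ |g xs y i - g xs ys i|) :
    ∀ ρ : Fin m → ℝ, (∀ i, L / (m * Finset.univ.inf' hm l) ≤ ρ i) →
      (∀ x ∈ X, f xs ys + (∑ i, ρ i * |g xs ys i|) ≤
        f x ys + ∑ i, ρ i * |g x ys i|) ∧
      (∀ y ∈ Y, f xs ys + (∑ i, ρ i * |g xs ys i|) ≤
        f xs y + ∑ i, ρ i * |g xs y i|) := by

  intro ρ hρ
  set lb := Finset.univ.inf' hm l with hlb
  have hm0 : 0 < (m:ℝ) := by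
    obtain ⟨i, _⟩ := hm
    exact_mod_cast i.pos
  have hlbpos : 0 < lb := by
    obtain ⟨i, _, hi⟩ := Finset.exists_mem_eq_inf' hm l
    rw [hlb, hi]; exact hl i
  have hρ0 : ∀ i, 0 ≤ ρ i := fun i =>
    le_trans (div_nonneg hL (by positivity)) (hρ i)
  have key : ∀ (h : Fin m → ℝ) (d : ℝ), 0 ≤ d → (∀ i, l i * d ≤ |h i|) →
      L * d ≤ ∑ i, ρ i * |h i| := by
    intro h d hd hlow
    have step : ∀ i, L / (m * lb) * (lb * d) ≤ ρ i * |h i| := by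
      intro i
      have h1 : lb * d ≤ |h i| := le_trans (by
        have : lb ≤ l i := Finset.inf'_le _ (Finset.mem_univ i)
        nlinarith) (hlow i)
      have h2 : 0 ≤ lb * d := by positivity
      have h3 : 0 ≤ L / (m * lb) := div_nonneg hL (by positivity)
      calc L / (m * lb) * (lb * d) ≤ L / (m * lb) * |h i| := by nlinarith
        _ ≤ ρ i * |h i| := by nlinarith [abs_nonneg (h i), hρ i]
    calc L * d = ∑ _i : Fin m, L / (m * lb) * (lb * d) := by
          rw [Finset.sum_const, Finset.card_univ, Fintype.card_fin, nsmul_eq_mul]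
          field_simp
      _ ≤ ∑ i, ρ i * |h i| := Finset.sum_le_sum (fun i _ => step i)
  have hzero : (∑ i, ρ i * |g xs ys i|) = 0 := by
    simp [hfeas]
  constructor
  · intro x hxX
    rw [hzero, add_zero]
    have h1 : f xs ys - f x ys ≤ L * ‖x - xs‖ := by
      have := abs_le.mp (hfx x hxX); linarith [this.1, this.2]
    have h2 : L * ‖x - xs‖ ≤ ∑ i, ρ i * |g x ys i| := by
      apply key _ _ (norm_nonneg _)
      intro i
      have := hgx i x hxX
      rwa [hfeas i, sub_zero] at this
    linarith
  · intro y hyY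
    rw [hzero, add_zero]
    have h1 : f xs ys - f xs y ≤ L * ‖y - ys‖ := by
      have := abs_le.mp (hfy y hyY); linarith [this.1, this.2]
    have h2 : L * ‖y - ys‖ ≤ ∑ i, ρ i * |g xs y i| := by
      apply key _ _ (norm_nonneg _)
      intro i
      have := hgy i y hyY
      rwa [hfeas i, sub_zero] at this
    linarith
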